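/- For generic q and |zw| < 1, the pairing of the boundary vector ⟨η_1| with a monomial in q-boson operators is ⟨η_1| z^h (a⁺)^j k^m w^h |η_1⟩ = z^j (−q;q)_j (−q^{j+m+1}zw; q)_∞ / (q^m zw; q)_∞, where ⟨η_1| = Σ_{m≥0} ⟨m|/(q;q)_m, |η_1⟩ = Σ_{m≥0} |m⟩/(q;q)_m, ⟨m|m'⟩ = (q²;q²)_m δ_{m,m'}, and h is the number operator. -/

import Mathlib

noncomputable section

/-- The finite q-Pochhammer symbol `(q;q)_m = ∏_{j=1}^m (1 - q^j)`. -/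
def qpoch (q : ℂ) (m : ℕ) : ℂ := ∏ j ∈ Finset.range m, (1 - q ^ (j + 1))

/-- `a⁺` on the completed Fock space (coefficient-wise). -/
def aP (v : ℕ → ℂ) : ℕ → ℂ := fun m => match m with
  | 0 => 0
  | Nat.succ l => v l

/-- `z^h`: `(z^h v)_m = z^m v_m`. -/
def zh (z : ℂ) (v : ℕ → ℂ) : ℕ → ℂ := fun m => z ^ m * v m

/-- `k^m`: `(k^m v)_l = q^{lm} v_l`. -/
def kPow (q : ℂ) (m : ℕ) (v : ℕ → ℂ) : ℕ → ℂ := fun l => q ^ (l * m) * v l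

/-- The boundary vector `|η_1⟩ = Σ_{m ≥ 0} |m⟩/(q;q)_m`. -/
def eta1 (q : ℂ) : ℕ → ℂ := fun m => (qpoch q m)⁻¹

/-- The pairing `⟨η_1| v` where `⟨η_1| = Σ_m ⟨m|/(q;q)_m` and `⟨m|m'⟩ = (q²;q²)_m δ_{m,m'}`. -/
def braEta1 (q : ℂ) (v : ℕ → ℂ) : ℂ := ∑' m : ℕ, (qpoch (q ^ 2) m / qpoch q m) * v m

open Filter Finset Topology

set_option maxHeartbeats 1000000

namespace QB

variable {q a x t y : ℂ}

lemma one_sub_ne (ht : ‖t‖ < 1) : (1 : ℂ) - t ≠ 0 := by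
  intro h
  have : (1 : ℂ) = t := by linear_combination h
  rw [← this] at ht; simp at ht

lemma qpoch_ne_zero (hq : ‖q‖ < 1) (n : ℕ) : qpoch q n ≠ 0 := by
  refine Finset.prod_ne_zero_iff.2 fun i _ => one_sub_ne ?_
  rw [norm_pow]
  exact pow_lt_one₀ (norm_nonneg q) hq (Nat.succ_ne_zero i)

lemma norm_pow_le_one (hq : ‖q‖ < 1) (n : ℕ) : ‖q ^ n‖ ≤ 1 := by
  rw [norm_pow]; exact pow_le_one₀ (norm_nonneg q) hq.le

lemma factor_norm_lt (hq : ‖q‖ < 1) (ht : ‖t‖ < 1) (n : ℕ) : ‖t * q ^ n‖ < 1 := by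
  rw [norm_mul]
  calc ‖t‖ * ‖q ^ n‖ ≤ ‖t‖ * 1 :=
        mul_le_mul_of_nonneg_left (norm_pow_le_one hq n) (norm_nonneg t)
    _ = ‖t‖ := mul_one _
    _ < 1 := ht

lemma factor_ne (hq : ‖q‖ < 1) (ht : ‖t‖ < 1) (n : ℕ) : (1 : ℂ) - t * q ^ n ≠ 0 :=
  one_sub_ne (factor_norm_lt hq ht n)

lemma summable_log (hq : ‖q‖ < 1) (t : ℂ) :
    Summable (fun i : ℕ => Complex.log (1 - t * q ^ i)) := by
  apply Summable.of_norm_bounded_eventually_nat (g := fun i => 3 / 2 * ‖t‖ * ‖q‖ ^ i)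
  · exact (summable_geometric_of_lt_one (norm_nonneg q) hq).mul_left _
  · have h1 : Tendsto (fun i : ℕ => ‖t‖ * ‖q‖ ^ i) atTop (𝓝 0) := by
      simpa using (tendsto_pow_atTop_nhds_zero_of_lt_one (norm_nonneg q) hq).const_mul ‖t‖
    filter_upwards [h1.eventually (eventually_le_nhds (by norm_num : (0:ℝ) < 1/2))] with i hi
    have hn : ‖-(t * q ^ i)‖ ≤ 1 / 2 := by
      rw [norm_neg, norm_mul, norm_pow]; exact hi
    have := Complex.norm_log_one_add_half_le_self hn
    rw [← sub_eq_add_neg] at this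
    calc ‖Complex.log (1 - t * q ^ i)‖ ≤ 3 / 2 * ‖-(t * q ^ i)‖ := this
      _ = 3 / 2 * ‖t‖ * ‖q‖ ^ i := by rw [norm_neg, norm_mul, norm_pow]; ring

lemma tprod_eq_exp (hq : ‖q‖ < 1) (ht : ‖t‖ < 1) :
    (∏' i : ℕ, (1 - t * q ^ i)) = Complex.exp (∑' i : ℕ, Complex.log (1 - t * q ^ i)) := by
  have h := Complex.cexp_tsum_eq_tprod (f := fun n => 1 - t * q ^ n)
    (fun n => factor_ne hq ht n) (summable_log hq t)
  exact h.symm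

lemma tprod_ne_zero (hq : ‖q‖ < 1) (ht : ‖t‖ < 1) :
    (∏' i : ℕ, (1 - t * q ^ i)) ≠ 0 := by
  rw [tprod_eq_exp hq ht]; exact Complex.exp_ne_zero _

lemma multipliable_fac (hq : ‖q‖ < 1) (ht : ‖t‖ < 1) :
    Multipliable (fun i : ℕ => (1 - t * q ^ i)) :=
  Complex.multipliable_of_summable_log (f := fun n => 1 - t * q ^ n)
    (summable_log hq t)

lemma norm_mul_q_lt (hq : ‖q‖ < 1) (ht : ‖t‖ < 1) : ‖t * q‖ < 1 := by
  simpa using factor_norm_lt hq ht 1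

lemma tprod_shift (hq : ‖q‖ < 1) (ht : ‖t‖ < 1) :
    (∏' i : ℕ, (1 - t * q ^ i)) = (1 - t) * ∏' i : ℕ, (1 - t * q * q ^ i) := by
  have hm : Multipliable (fun i : ℕ => (1 - t * q ^ (i + 1))) := by
    apply (multipliable_fac hq (norm_mul_q_lt hq ht)).congr
    intro i; rw [pow_succ]; ring
  rw [tprod_eq_zero_mul' (f := fun i : ℕ => 1 - t * q ^ i) hm]
  congr 1
  · simp
  · exact tprod_congr fun i => by rw [pow_succ]; ring

/-- the q-binomial coefficient sequence `(a;q)_n / (q;q)_n` -/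
def coeff (q a : ℂ) (n : ℕ) : ℂ := (∏ i ∈ Finset.range n, (1 - a * q ^ i)) / qpoch q n

lemma coeff_zero : coeff q a 0 = 1 := by simp [coeff, qpoch]

lemma coeff_rec (hq : ‖q‖ < 1) (n : ℕ) :
    coeff q a (n + 1) * (1 - q ^ (n + 1)) = coeff q a n * (1 - a * q ^ n) := by
  have h1 : qpoch q (n + 1) = qpoch q n * (1 - q ^ (n + 1)) := Finset.prod_range_succ _ n
  have h2 : (1 : ℂ) - q ^ (n + 1) ≠ 0 := by
    apply one_sub_ne; rw [norm_pow]
    exact pow_lt_one₀ (norm_nonneg q) hq (Nat.succ_ne_zero n)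
  have h3 := qpoch_ne_zero hq n
  rw [coeff, coeff, h1, Finset.prod_range_succ]
  field_simp

lemma coeff_succ (hq : ‖q‖ < 1) (n : ℕ) :
    coeff q a (n + 1) = coeff q a n * (1 - a * q ^ n) / (1 - q ^ (n + 1)) := by
  have h2 : (1 : ℂ) - q ^ (n + 1) ≠ 0 := by
    apply one_sub_ne; rw [norm_pow]
    exact pow_lt_one₀ (norm_nonneg q) hq (Nat.succ_ne_zero n)
  rw [eq_div_iff h2]; exact coeff_rec hq n

lemma summable_norm_coeff (hq : ‖q‖ < 1) (ha : ‖a‖ ≤ 1) (hx : ‖x‖ < 1) :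
    Summable (fun n : ℕ => ‖coeff q a n‖ * ‖x‖ ^ n) := by
  set r' : ℝ := (1 + ‖x‖) / 2 with hr'
  have hr'1 : r' < 1 := by rw [hr']; linarith
  have hr'0 : 0 ≤ r' := by positivity
  apply summable_of_ratio_norm_eventually_le hr'1
  have hq0 : Tendsto (fun n : ℕ => ‖q‖ ^ n) atTop (𝓝 0) :=
    tendsto_pow_atTop_nhds_zero_of_lt_one (norm_nonneg q) hq
  have htend : Tendsto (fun n : ℕ => r' * (1 - ‖q‖ * ‖q‖ ^ n) - ‖x‖ * (1 + ‖q‖ ^ n)) atTop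
      (𝓝 (r' * (1 - ‖q‖ * 0) - ‖x‖ * (1 + 0))) := by
    exact ((tendsto_const_nhds.mul ((tendsto_const_nhds.sub (tendsto_const_nhds.mul hq0)))).sub
      (tendsto_const_nhds.mul (tendsto_const_nhds.add hq0)))
  have hlim : (0:ℝ) < r' * (1 - ‖q‖ * 0) - ‖x‖ * (1 + 0) := by
    simp only [mul_zero, sub_zero, add_zero, mul_one]
    rw [hr']; linarith
  filter_upwards [htend.eventually (eventually_gt_nhds hlim)] with n hn
  have hkey : ‖x‖ * (1 + ‖q‖ ^ n) ≤ r' * (1 - ‖q‖ ^ (n + 1)) := by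
    rw [pow_succ']
    linarith
  have hd : (1:ℝ) - ‖q‖ ^ (n + 1) ≤ ‖(1:ℂ) - q ^ (n + 1)‖ := by
    calc (1:ℝ) - ‖q‖ ^ (n+1) = ‖(1:ℂ)‖ - ‖q ^ (n+1)‖ := by rw [norm_one, norm_pow]
      _ ≤ ‖(1:ℂ) - q ^ (n + 1)‖ := norm_sub_norm_le _ _
  have hdpos : (0:ℝ) < ‖(1:ℂ) - q ^ (n + 1)‖ := by
    rw [norm_pos_iff]
    apply one_sub_ne; rw [norm_pow]
    exact pow_lt_one₀ (norm_nonneg q) hq (Nat.succ_ne_zero n)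
  have hnum : ‖(1:ℂ) - a * q ^ n‖ ≤ 1 + ‖q‖ ^ n := by
    calc ‖(1:ℂ) - a * q ^ n‖ ≤ ‖(1:ℂ)‖ + ‖a * q ^ n‖ := norm_sub_le _ _
      _ = 1 + ‖a‖ * ‖q‖ ^ n := by rw [norm_one, norm_mul, norm_pow]
      _ ≤ 1 + 1 * ‖q‖ ^ n := by
          have : ‖a‖ * ‖q‖ ^ n ≤ 1 * ‖q‖ ^ n :=
            mul_le_mul_of_nonneg_right ha (by positivity)
          linarith
      _ = 1 + ‖q‖ ^ n := by rw [one_mul]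
  rw [Real.norm_of_nonneg (by positivity), Real.norm_of_nonneg (by positivity)]
  rw [coeff_succ hq n]
  rw [norm_div, norm_mul]
  rw [div_mul_eq_mul_div, div_le_iff₀ hdpos]
  calc ‖coeff q a n‖ * ‖1 - a * q ^ n‖ * ‖x‖ ^ (n + 1)
      = (‖coeff q a n‖ * ‖x‖ ^ n) * (‖x‖ * ‖1 - a * q ^ n‖) := by ring
    _ ≤ (‖coeff q a n‖ * ‖x‖ ^ n) * (‖x‖ * (1 + ‖q‖ ^ n)) := by
        apply mul_le_mul_of_nonneg_left _ (by positivity)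
        exact mul_le_mul_of_nonneg_left hnum (norm_nonneg x)
    _ ≤ (‖coeff q a n‖ * ‖x‖ ^ n) * (r' * (1 - ‖q‖ ^ (n+1))) := by
        apply mul_le_mul_of_nonneg_left hkey (by positivity)
    _ ≤ (‖coeff q a n‖ * ‖x‖ ^ n) * (r' * ‖(1:ℂ) - q ^ (n+1)‖) := by
        apply mul_le_mul_of_nonneg_left _ (by positivity)
        exact mul_le_mul_of_nonneg_left hd hr'0
    _ = r' * (‖coeff q a n‖ * ‖x‖ ^ n) * ‖(1:ℂ) - q ^ (n+1)‖ := by ring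

lemma summable_coeff_at (hq : ‖q‖ < 1) (ha : ‖a‖ ≤ 1) (hx : ‖x‖ < 1) (hy : ‖y‖ ≤ ‖x‖) :
    Summable (fun n : ℕ => coeff q a n * y ^ n) := by
  apply Summable.of_norm_bounded (summable_norm_coeff hq ha hx)
  intro n
  rw [norm_mul, norm_pow]
  exact mul_le_mul_of_nonneg_left (pow_le_pow_left₀ (norm_nonneg y) hy n) (norm_nonneg _)

/-- the basic hypergeometric series `Σ (a;q)_n/(q;q)_n y^n` -/
def Fser (q a y : ℂ) : ℂ := ∑' n : ℕ, coeff q a n * y ^ n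

lemma funeq (hq : ‖q‖ < 1) (ha : ‖a‖ ≤ 1) (hy : ‖y‖ < 1) :
    (1 - y) * Fser q a y = (1 - a * y) * Fser q a (q * y) := by
  have hqy : ‖q * y‖ ≤ ‖y‖ := by
    rw [norm_mul]
    calc ‖q‖ * ‖y‖ ≤ 1 * ‖y‖ := mul_le_mul_of_nonneg_right hq.le (norm_nonneg y)
      _ = ‖y‖ := one_mul _
  have hs1 : Summable (fun n : ℕ => coeff q a n * y ^ n) :=
    summable_coeff_at hq ha hy le_rfl
  have hs2 : Summable (fun n : ℕ => coeff q a n * (q * y) ^ n) :=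
    summable_coeff_at hq ha hy hqy
  have hg : Summable (fun n : ℕ => coeff q a n * y ^ n - coeff q a n * (q * y) ^ n) :=
    hs1.sub hs2
  have hgs : Summable (fun n : ℕ =>
      coeff q a (n+1) * y ^ (n+1) - coeff q a (n+1) * (q * y) ^ (n+1)) := by
    exact (summable_nat_add_iff 1).mpr hg
  have key : Fser q a y - Fser q a (q * y)
      = y * Fser q a y - a * y * Fser q a (q * y) := by
    have e1 : Fser q a y - Fser q a (q * y)
        = ∑' n : ℕ, (coeff q a n * y ^ n - coeff q a n * (q * y) ^ n) := by
      rw [Fser, Fser, ← Summable.tsum_sub hs1 hs2]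
    rw [e1, Summable.tsum_eq_zero_add hg]
    simp only [pow_zero, mul_one, sub_self, zero_add]
    have e2 : ∀ n : ℕ, coeff q a (n+1) * y ^ (n+1) - coeff q a (n+1) * (q * y) ^ (n+1)
        = y * (coeff q a n * y ^ n) - a * y * (coeff q a n * (q * y) ^ n) := by
      intro n
      have hrec := coeff_rec (a := a) hq n
      have : coeff q a (n+1) * y ^ (n+1) - coeff q a (n+1) * (q * y) ^ (n+1)
          = (coeff q a (n+1) * (1 - q ^ (n+1))) * y ^ (n+1) := by
        rw [mul_pow]; ring
      rw [this, hrec, mul_pow]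
      ring
    rw [tsum_congr e2]
    rw [Summable.tsum_sub (hs1.mul_left y) (hs2.mul_left (a * y))]
    rw [tsum_mul_left, tsum_mul_left]
    rfl
  linear_combination key

/-- `R y = F(y) * (y;q)_∞` -/
def Rfun (q a y : ℂ) : ℂ := Fser q a y * ∏' i : ℕ, (1 - y * q ^ i)

lemma Rfun_step (hq : ‖q‖ < 1) (ha : ‖a‖ ≤ 1) (hy : ‖y‖ < 1) :
    Rfun q a y = (1 - a * y) * Rfun q a (q * y) := by
  rw [Rfun, Rfun, tprod_shift hq hy]
  have h1 : Fser q a y * ((1 - y) * ∏' i : ℕ, (1 - y * q * q ^ i))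
      = ((1 - y) * Fser q a y) * ∏' i : ℕ, (1 - y * q * q ^ i) := by ring
  rw [h1, funeq hq ha hy]
  have h2 : ∀ i : ℕ, (1 : ℂ) - y * q * q ^ i = 1 - q * y * q ^ i := by intro i; ring
  rw [tprod_congr h2]
  ring

lemma Rfun_iter (hq : ‖q‖ < 1) (ha : ‖a‖ ≤ 1) (hx : ‖x‖ < 1) (N : ℕ) :
    Rfun q a x = (∏ i ∈ Finset.range N, (1 - a * q ^ i * x)) * Rfun q a (q ^ N * x) := by
  induction N with
  | zero => simp
  | succ k ih =>
    rw [ih, Finset.prod_range_succ]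
    have hyk : ‖q ^ k * x‖ < 1 := by
      calc ‖q ^ k * x‖ = ‖q ^ k‖ * ‖x‖ := norm_mul _ _
        _ ≤ 1 * ‖x‖ := mul_le_mul_of_nonneg_right (norm_pow_le_one hq k) (norm_nonneg x)
        _ = ‖x‖ := one_mul _
        _ < 1 := hx
    rw [Rfun_step hq ha hyk]
    have e1 : q * (q ^ k * x) = q ^ (k + 1) * x := by rw [pow_succ]; ring
    have e2 : a * (q ^ k * x) = a * q ^ k * x := by ring
    rw [e1, e2]
    ring


lemma norm_qpow_mul_le (hq : ‖q‖ < 1) (N : ℕ) : ‖q ^ N * x‖ ≤ ‖x‖ := by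
  rw [norm_mul]
  calc ‖q ^ N‖ * ‖x‖ ≤ 1 * ‖x‖ :=
        mul_le_mul_of_nonneg_right (norm_pow_le_one hq N) (norm_nonneg x)
    _ = ‖x‖ := one_mul _

lemma tendsto_Fser (hq : ‖q‖ < 1) (ha : ‖a‖ ≤ 1) (hx : ‖x‖ < 1) :
    Tendsto (fun N : ℕ => Fser q a (q ^ N * x)) atTop (𝓝 1) := by
  have hsn := summable_norm_coeff (a := a) hq ha hx
  have hshift : Summable (fun n : ℕ => ‖coeff q a (n + 1)‖ * ‖x‖ ^ (n + 1)) :=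
    (summable_nat_add_iff 1).mpr hsn
  set M : ℝ := ∑' n : ℕ, ‖coeff q a (n + 1)‖ * ‖x‖ ^ (n + 1) with hM
  have hbound : ∀ N : ℕ, ‖Fser q a (q ^ N * x) - 1‖ ≤ ‖q‖ ^ N * M := by
    intro N
    have hyN : ‖q ^ N * x‖ ≤ ‖x‖ := norm_qpow_mul_le hq N
    have hsum := summable_coeff_at hq ha hx hyN
    have e1 : Fser q a (q ^ N * x) - 1
        = ∑' n : ℕ, coeff q a (n + 1) * (q ^ N * x) ^ (n + 1) := by
      rw [Fser, Summable.tsum_eq_zero_add hsum, coeff_zero, pow_zero, mul_one, add_sub_cancel_left]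
    rw [e1]
    have hterm : ∀ n : ℕ, ‖coeff q a (n + 1) * (q ^ N * x) ^ (n + 1)‖
        ≤ ‖q‖ ^ N * (‖coeff q a (n + 1)‖ * ‖x‖ ^ (n + 1)) := by
      intro n
      rw [norm_mul, norm_pow, norm_mul, norm_pow, mul_pow]
      have h1 : (‖q‖ ^ N) ^ (n + 1) ≤ (‖q‖ ^ N) ^ 1 :=
        pow_le_pow_of_le_one (by positivity) (pow_le_one₀ (norm_nonneg q) hq.le)
          (by omega)
      rw [pow_one] at h1
      calc ‖coeff q a (n+1)‖ * ((‖q‖ ^ N) ^ (n+1) * ‖x‖ ^ (n+1))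
          ≤ ‖coeff q a (n+1)‖ * (‖q‖ ^ N * ‖x‖ ^ (n+1)) := by
            apply mul_le_mul_of_nonneg_left _ (norm_nonneg _)
            exact mul_le_mul_of_nonneg_right h1 (by positivity)
        _ = ‖q‖ ^ N * (‖coeff q a (n+1)‖ * ‖x‖ ^ (n+1)) := by ring
    calc ‖∑' n : ℕ, coeff q a (n + 1) * (q ^ N * x) ^ (n + 1)‖
        ≤ ∑' n : ℕ, ‖q‖ ^ N * (‖coeff q a (n + 1)‖ * ‖x‖ ^ (n + 1)) :=
          tsum_of_norm_bounded (hshift.mul_left (‖q‖ ^ N)).hasSum hterm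
      _ = ‖q‖ ^ N * M := by rw [tsum_mul_left]
  have h0 : Tendsto (fun N : ℕ => Fser q a (q ^ N * x) - 1) atTop (𝓝 0) := by
    apply squeeze_zero_norm hbound
    have := (tendsto_pow_atTop_nhds_zero_of_lt_one (norm_nonneg q) hq).mul_const M
    simpa using this
  have := h0.add (tendsto_const_nhds (x := (1 : ℂ)))
  simpa using this

lemma tendsto_P (hq : ‖q‖ < 1) (hx : ‖x‖ < 1) :
    Tendsto (fun N : ℕ => ∏' i : ℕ, (1 - (q ^ N * x) * q ^ i)) atTop (𝓝 1) := by
  have hyN : ∀ N : ℕ, ‖q ^ N * x‖ < 1 := fun N => lt_of_le_of_lt (norm_qpow_mul_le hq N) hx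
  have hT : Tendsto (fun N : ℕ => ∑' i : ℕ, Complex.log (1 - (q ^ N * x) * q ^ i)) atTop
      (𝓝 0) := by
    apply squeeze_zero_norm' (a := fun N : ℕ => 3 / 2 * ‖x‖ * (1 - ‖q‖)⁻¹ * ‖q‖ ^ N)
    · have h1 : Tendsto (fun N : ℕ => ‖q‖ ^ N * ‖x‖) atTop (𝓝 0) := by
        simpa using (tendsto_pow_atTop_nhds_zero_of_lt_one (norm_nonneg q) hq).mul_const ‖x‖
      filter_upwards [h1.eventually (eventually_le_nhds (by norm_num : (0:ℝ) < 1/2))] with N hN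
      have hterm : ∀ i : ℕ, ‖Complex.log (1 - (q ^ N * x) * q ^ i)‖
          ≤ 3 / 2 * (‖q‖ ^ N * ‖x‖) * ‖q‖ ^ i := by
        intro i
        have hni : ‖-((q ^ N * x) * q ^ i)‖ ≤ 1 / 2 := by
          rw [norm_neg, norm_mul, norm_mul, norm_pow, norm_pow]
          calc ‖q‖ ^ N * ‖x‖ * ‖q‖ ^ i ≤ ‖q‖ ^ N * ‖x‖ * 1 := by
                apply mul_le_mul_of_nonneg_left (pow_le_one₀ (norm_nonneg q) hq.le)
                positivity
            _ = ‖q‖ ^ N * ‖x‖ := mul_one _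
            _ ≤ 1 / 2 := hN
        have := Complex.norm_log_one_add_half_le_self hni
        rw [← sub_eq_add_neg] at this
        calc ‖Complex.log (1 - (q ^ N * x) * q ^ i)‖ ≤ 3 / 2 * ‖-((q ^ N * x) * q ^ i)‖ := this
          _ = 3 / 2 * (‖q‖ ^ N * ‖x‖) * ‖q‖ ^ i := by
              rw [norm_neg, norm_mul, norm_mul, norm_pow, norm_pow]; ring
      have hgeo : Summable (fun i : ℕ => 3 / 2 * (‖q‖ ^ N * ‖x‖) * ‖q‖ ^ i) :=
        (summable_geometric_of_lt_one (norm_nonneg q) hq).mul_left _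
      calc ‖∑' i : ℕ, Complex.log (1 - (q ^ N * x) * q ^ i)‖
          ≤ ∑' i : ℕ, 3 / 2 * (‖q‖ ^ N * ‖x‖) * ‖q‖ ^ i :=
            tsum_of_norm_bounded hgeo.hasSum hterm
        _ = 3 / 2 * (‖q‖ ^ N * ‖x‖) * (1 - ‖q‖)⁻¹ := by
            rw [tsum_mul_left, tsum_geometric_of_lt_one (norm_nonneg q) hq]
        _ = 3 / 2 * ‖x‖ * (1 - ‖q‖)⁻¹ * ‖q‖ ^ N := by ring
    · have := (tendsto_pow_atTop_nhds_zero_of_lt_one (norm_nonneg q) hq).const_mul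
        (3 / 2 * ‖x‖ * (1 - ‖q‖)⁻¹)
      simpa using this
  have hexp : Tendsto (fun N : ℕ =>
      Complex.exp (∑' i : ℕ, Complex.log (1 - (q ^ N * x) * q ^ i))) atTop (𝓝 1) := by
    have := (Complex.continuous_exp.tendsto 0).comp hT
    simpa [Function.comp_def] using this
  apply hexp.congr
  intro N
  exact (tprod_eq_exp hq (hyN N)).symm

/-- The q-binomial theorem. -/
lemma qbinom (hq : ‖q‖ < 1) (ha : ‖a‖ ≤ 1) (hx : ‖x‖ < 1) :
    Fser q a x * ∏' i : ℕ, (1 - x * q ^ i) = ∏' i : ℕ, (1 - a * x * q ^ i) := by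
  have hax : ‖a * x‖ < 1 := by
    rw [norm_mul]
    calc ‖a‖ * ‖x‖ ≤ 1 * ‖x‖ := mul_le_mul_of_nonneg_right ha (norm_nonneg x)
      _ = ‖x‖ := one_mul _
      _ < 1 := hx
  have hQm : Multipliable (fun i : ℕ => 1 - (a * x) * q ^ i) := multipliable_fac hq hax
  have h1 : Tendsto (fun N : ℕ => ∏ i ∈ Finset.range N, (1 - a * q ^ i * x)) atTop
      (𝓝 (∏' i : ℕ, (1 - a * x * q ^ i))) := by
    have := hQm.hasProd.tendsto_prod_nat
    have e : ∀ N : ℕ, ∏ i ∈ Finset.range N, (1 - a * x * q ^ i)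
        = ∏ i ∈ Finset.range N, (1 - a * q ^ i * x) :=
      fun N => Finset.prod_congr rfl fun i _ => by ring
    have e2 : (∏' i : ℕ, (1 - (a * x) * q ^ i)) = ∏' i : ℕ, (1 - a * x * q ^ i) := rfl
    rw [e2] at this
    exact this.congr e
  have h2 : Tendsto (fun N : ℕ => Rfun q a (q ^ N * x)) atTop (𝓝 1) := by
    have := (tendsto_Fser hq ha hx).mul (tendsto_P hq hx)
    simpa [Rfun] using this
  have h3 := h1.mul h2
  rw [mul_one] at h3
  have h4 : (fun N : ℕ => (∏ i ∈ Finset.range N, (1 - a * q ^ i * x)) * Rfun q a (q ^ N * x))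
      = fun _ : ℕ => Rfun q a x := funext fun N => (Rfun_iter hq ha hx N).symm
  rw [h4] at h3
  have := tendsto_nhds_unique h3 tendsto_const_nhds
  show Rfun q a x = _
  exact this.symm


lemma aP_iter_add (u : ℕ → ℂ) (j l : ℕ) : (aP^[j] u) (l + j) = u l := by
  induction j with
  | zero => rfl
  | succ k ih =>
    rw [Function.iterate_succ_apply']
    show (aP^[k] u) (l + k) = u l
    exact ih

lemma aP_iter_lt (u : ℕ → ℂ) {j n : ℕ} (h : n < j) : (aP^[j] u) n = 0 := by
  induction j generalizing n with
  | zero => omega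
  | succ k ih =>
    rw [Function.iterate_succ_apply']
    match n with
    | 0 => rfl
    | Nat.succ m => exact ih (by omega)

lemma qpoch_sq (n : ℕ) :
    qpoch (q ^ 2) n = qpoch q n * ∏ i ∈ Finset.range n, (1 + q ^ (i + 1)) := by
  rw [qpoch, qpoch, ← Finset.prod_mul_distrib]
  exact Finset.prod_congr rfl fun i _ => by ring

end QB

open QB in
theorem stmt9 (q z w : ℂ) (j m : ℕ) (hq : ‖q‖ < 1) (hzw : ‖z * w‖ < 1) :
    braEta1 q (zh z (aP^[j] (kPow q m (zh w (eta1 q))))) =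
      z ^ j * (∏ i ∈ Finset.range j, (1 + q ^ (i + 1))) *
        (∏' i : ℕ, (1 + q ^ (j + m + 1 + i) * (z * w))) /
        (∏' i : ℕ, (1 - q ^ (m + i) * (z * w))) := by
  have hx : ‖q ^ m * (z * w)‖ < 1 := by
    calc ‖q ^ m * (z * w)‖ = ‖q ^ m‖ * ‖z * w‖ := norm_mul _ _
      _ ≤ 1 * ‖z * w‖ := mul_le_mul_of_nonneg_right (norm_pow_le_one hq m) (norm_nonneg _)
      _ = ‖z * w‖ := one_mul _
      _ < 1 := hzw
  have ha : ‖-q ^ (j + 1)‖ ≤ 1 := by rw [norm_neg]; exact norm_pow_le_one hq (j + 1)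
  set a : ℂ := -q ^ (j + 1) with hadef
  set x : ℂ := q ^ m * (z * w) with hxdef
  -- reindex the sum
  have hinj : Function.Injective (fun l : ℕ => l + j) := fun l₁ l₂ h => by
    have h' : l₁ + j = l₂ + j := h
    omega
  have hsupp : ∀ n : ℕ, n ∉ Set.range (fun l : ℕ => l + j) →
      (qpoch (q ^ 2) n / qpoch q n) * (zh z (aP^[j] (kPow q m (zh w (eta1 q)))) n) = 0 := by
    intro n hn
    have hnj : n < j := by
      by_contra h
      exact hn ⟨n - j, show n - j + j = n by omega⟩
    rw [zh, aP_iter_lt _ hnj, mul_zero, mul_zero]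
  have hre := Function.Injective.tsum_eq hinj
      (f := fun n => (qpoch (q ^ 2) n / qpoch q n) * (zh z (aP^[j] (kPow q m (zh w (eta1 q)))) n))
      (Function.support_subset_iff'.mpr hsupp)
  rw [braEta1, ← hre]
  have hterm : ∀ l : ℕ,
      (qpoch (q ^ 2) (l + j) / qpoch q (l + j)) *
        (zh z (aP^[j] (kPow q m (zh w (eta1 q)))) (l + j))
      = (z ^ j * ∏ i ∈ Finset.range j, (1 + q ^ (i + 1))) * (coeff q a l * x ^ l) := by
    intro l
    rw [zh, aP_iter_add, kPow, zh, eta1]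
    rw [qpoch_sq, mul_comm (qpoch q (l + j)), mul_div_assoc,
      div_self (qpoch_ne_zero hq (l + j)), mul_one]
    rw [add_comm l j, Finset.prod_range_add]
    have hA : ∏ i ∈ Finset.range l, (1 + q ^ (j + i + 1)) = ∏ i ∈ Finset.range l, (1 - a * q ^ i) :=
      Finset.prod_congr rfl fun i _ => by rw [hadef]; ring
    rw [hA, coeff, hxdef]
    have hne := qpoch_ne_zero hq l
    field_simp
    ring
  rw [tsum_congr hterm, tsum_mul_left]
  have hqb := qbinom hq ha hx
  have hPne : (∏' i : ℕ, (1 - x * q ^ i)) ≠ 0 := tprod_ne_zero hq hx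
  have hF : Fser q a x = (∏' i : ℕ, (1 - a * x * q ^ i)) / ∏' i : ℕ, (1 - x * q ^ i) := by
    rw [eq_div_iff hPne]; exact hqb
  have hnum : (∏' i : ℕ, (1 + q ^ (j + m + 1 + i) * (z * w)))
      = ∏' i : ℕ, (1 - a * x * q ^ i) :=
    tprod_congr fun i => by rw [hadef, hxdef]; ring
  have hden : (∏' i : ℕ, (1 - q ^ (m + i) * (z * w))) = ∏' i : ℕ, (1 - x * q ^ i) :=
    tprod_congr fun i => by rw [hxdef]; ring
  rw [hnum, hden]
  show _ * Fser q a x = _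
  rw [hF]
  field_simp
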